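/- Let F_q be a finite field and k, ℓ nonnegative integers with k, ℓ < q-1. The toric code C_{P_{k,ℓ}} over F_q, obtained by evaluating the span of the monomials x^i y^j for 0 ≤ i ≤ k, 0 ≤ j ≤ ℓ at all points of (F_q^*)², has minimum distance exactly ((q-1) − k)·((q-1) − ℓ). -/

import Mathlib

open Polynomial Finset

section Aux
variable {F : Type*} [Field F] [Fintype F] [DecidableEq F]

lemma aux_card_eval_ne_zero {p : Polynomial F} (hp : p ≠ 0) {n : ℕ} (hn : p.natDegree ≤ n) :
    Fintype.card F - 1 - n ≤ (Finset.univ.filter fun y : Fˣ => ¬ p.eval (y : F) = 0).card := by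
  have hzero : (Finset.univ.filter fun y : Fˣ => p.eval (y : F) = 0).card ≤ n := by
    have h1 : (Finset.univ.filter fun y : Fˣ => p.eval (y : F) = 0).card ≤ p.roots.toFinset.card := by
      refine Finset.card_le_card_of_injOn (fun y : Fˣ => (y : F)) ?_ ?_
      · intro y hy
        rw [Finset.mem_coe, Multiset.mem_toFinset, mem_roots hp]
        exact (Finset.mem_filter.mp (Finset.mem_coe.mp hy)).2
      · intro a _ b _ h
        exact Units.ext h
    exact h1.trans ((p.roots.toFinset_card_le).trans (p.card_roots'.trans hn))
  have htot := Finset.card_filter_add_card_filter_not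
    (s := (Finset.univ : Finset Fˣ)) (p := fun y : Fˣ => p.eval (y : F) = 0)
  simp only [Finset.card_univ, Fintype.card_units] at htot
  omega

lemma aux_card_filter_prod {α β : Type*} [Fintype α] [Fintype β] [DecidableEq α]
    (P : α × β → Prop) [DecidablePred P] :
    (Finset.univ.filter P).card = ∑ x : α, (Finset.univ.filter fun y => P (x, y)).card := by
  rw [Finset.card_eq_sum_card_fiberwise (f := Prod.fst) (t := Finset.univ)
    (fun _ _ => Finset.mem_univ _)]
  refine Finset.sum_congr rfl fun x _ => ?_
  refine Finset.card_bij (fun p _ => p.2) ?_ ?_ ?_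
  · intro p hp
    simp only [Finset.mem_filter, Finset.mem_univ, true_and] at hp ⊢
    rw [← hp.2]; exact hp.1
  · intro p hp q hq h
    simp only [Finset.mem_filter, Finset.mem_univ, true_and] at hp hq
    exact Prod.ext (hp.2.trans hq.2.symm) h
  · intro y hy
    simp only [Finset.mem_filter, Finset.mem_univ, true_and] at hy ⊢
    exact ⟨(x, y), ⟨hy, rfl⟩, rfl⟩

end Aux

/-- The toric code of the rectangle `[0,k] × [0,ℓ]` over `F_q` has minimum distance
exactly `((q-1) - k) * ((q-1) - ℓ)`. -/
theorem rect_toric_code_min_dist {F : Type*} [Field F] [Fintype F]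
    (q k l : ℕ) (hq : Fintype.card F = q) (hk : k < q - 1) (hl : l < q - 1)
    (C : Set ((Fˣ × Fˣ) → F))
    (hC : C = {w | ∃ c : Fin (k + 1) × Fin (l + 1) → F,
      w = fun p => ∑ e : Fin (k + 1) × Fin (l + 1),
        c e * (p.1 : F) ^ (e.1 : ℕ) * (p.2 : F) ^ (e.2 : ℕ)}) :
    (∀ w ∈ C, w ≠ 0 → (q - 1 - k) * (q - 1 - l) ≤ {p | w p ≠ 0}.ncard) ∧
    (∃ w ∈ C, w ≠ 0 ∧ {p | w p ≠ 0}.ncard = (q - 1 - k) * (q - 1 - l)) := by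
  classical
  subst hC
  constructor
  · rintro w ⟨c, rfl⟩ hw
    set G : Fin (l+1) → Polynomial F := fun j => ∑ i : Fin (k+1), C (c (i, j)) * X ^ (i:ℕ) with hG
    set H : F → Polynomial F := fun x => ∑ j : Fin (l+1), C ((G j).eval x) * X ^ (j:ℕ) with hH
    have hGdeg : ∀ j, (G j).natDegree ≤ k := by
      intro j
      refine Polynomial.natDegree_sum_le_of_forall_le _ _ fun i _ => ?_
      refine (natDegree_C_mul_le _ _).trans ?_
      rw [natDegree_X_pow]; omega
    have hHdeg : ∀ x, (H x).natDegree ≤ l := by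
      intro x
      refine Polynomial.natDegree_sum_le_of_forall_le _ _ fun j _ => ?_
      refine (natDegree_C_mul_le _ _).trans ?_
      rw [natDegree_X_pow]; omega
    have hHcoeff : ∀ (x : F) (j : Fin (l+1)), (H x).coeff (j:ℕ) = (G j).eval x := by
      intro x j
      rw [hH]
      simp only [Polynomial.finset_sum_coeff, coeff_C_mul, coeff_X_pow]
      rw [Finset.sum_eq_single j]
      · simp
      · intro b _ hb
        rw [if_neg (fun h => hb (Fin.ext h.symm)), mul_zero]
      · intro h; exact absurd (Finset.mem_univ j) h
    have hweval : ∀ x y : F,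
        (∑ e : Fin (k+1) × Fin (l+1), c e * x ^ (e.1:ℕ) * y ^ (e.2:ℕ)) = (H x).eval y := by
      intro x y
      simp only [hH, hG, eval_finset_sum, eval_mul, eval_C, eval_pow, eval_X]
      rw [Fintype.sum_prod_type, Finset.sum_comm]
      refine Finset.sum_congr rfl fun j _ => ?_
      rw [Finset.sum_mul]
    have hwH : (fun p : Fˣ × Fˣ => ∑ e : Fin (k+1) × Fin (l+1),
        c e * (p.1 : F) ^ (e.1:ℕ) * (p.2 : F) ^ (e.2:ℕ))
        = fun p : Fˣ × Fˣ => (H ↑p.1).eval ↑p.2 := funext fun p => hweval _ _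
    rw [hwH] at hw ⊢
    -- find j0 with G j0 ≠ 0
    obtain ⟨p0, hp0⟩ := Function.ne_iff.mp hw
    simp only [Pi.zero_apply] at hp0
    have hH0 : H (↑p0.1 : F) ≠ 0 := fun h => hp0 (by rw [h, eval_zero])
    have hn : (H (↑p0.1 : F)).coeff ((H (↑p0.1 : F)).natDegree) ≠ 0 :=
      fun h => hH0 (Polynomial.leadingCoeff_eq_zero.mp h)
    have hnl : (H (↑p0.1 : F)).natDegree ≤ l := hHdeg _
    set j0 : Fin (l+1) := ⟨(H (↑p0.1 : F)).natDegree, by omega⟩ with hj0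
    have hGne : G j0 ≠ 0 := by
      intro h
      apply hn
      have h2 := hHcoeff (↑p0.1) j0
      rw [h, eval_zero] at h2
      exact h2
    have key : ∀ x : Fˣ, ¬ (G j0).eval (↑x : F) = 0 → H (↑x : F) ≠ 0 := by
      intro x hx h0
      apply hx
      rw [← hHcoeff (↑x) j0, h0, coeff_zero]
    have hS : (q - 1) - k ≤ (univ.filter fun x : Fˣ => ¬ (G j0).eval (↑x : F) = 0).card := by
      rw [← hq]; exact aux_card_eval_ne_zero hGne (hGdeg j0)
    rw [Set.ncard_eq_toFinset_card', Set.toFinset_setOf]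
    simp only [ne_eq]
    rw [aux_card_filter_prod (fun p : Fˣ × Fˣ => ¬ (H (↑p.1 : F)).eval (↑p.2 : F) = 0)]
    calc (q - 1 - k) * (q - 1 - l)
        ≤ (univ.filter fun x : Fˣ => ¬ (G j0).eval (↑x : F) = 0).card * (q - 1 - l) :=
          Nat.mul_le_mul_right _ hS
      _ ≤ ∑ x ∈ (univ.filter fun x : Fˣ => ¬ (G j0).eval (↑x : F) = 0),
            (univ.filter fun y : Fˣ => ¬ (H (↑x : F)).eval (↑y : F) = 0).card := by
          rw [← smul_eq_mul]
          refine Finset.card_nsmul_le_sum _ _ _ fun x hx => ?_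
          rw [← hq]
          refine aux_card_eval_ne_zero (key x (by simpa using hx)) (hHdeg _)
      _ ≤ ∑ x : Fˣ, (univ.filter fun y : Fˣ => ¬ (H (↑x : F)).eval (↑y : F) = 0).card :=
          Finset.sum_le_sum_of_subset (Finset.filter_subset _ _)
  · -- existence
    obtain ⟨A, -, hA⟩ := Finset.exists_subset_card_eq (s := (univ : Finset Fˣ)) (n := k)
      (by rw [Finset.card_univ, Fintype.card_units, hq]; omega)
    obtain ⟨B, -, hB⟩ := Finset.exists_subset_card_eq (s := (univ : Finset Fˣ)) (n := l)
      (by rw [Finset.card_univ, Fintype.card_units, hq]; omega)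
    set PA : Polynomial F := ∏ a ∈ A, (X - C (a:F)) with hPA
    set PB : Polynomial F := ∏ b ∈ B, (X - C (b:F)) with hPB
    have hPAdeg : PA.natDegree = k := by
      rw [hPA, natDegree_prod _ _ fun a _ => X_sub_C_ne_zero _]
      simp [natDegree_X_sub_C, hA]
    have hPBdeg : PB.natDegree = l := by
      rw [hPB, natDegree_prod _ _ fun a _ => X_sub_C_ne_zero _]
      simp [natDegree_X_sub_C, hB]
    have hPAiff : ∀ x : Fˣ, PA.eval (↑x : F) = 0 ↔ x ∈ A := by
      intro x
      rw [hPA, eval_prod, Finset.prod_eq_zero_iff]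
      constructor
      · rintro ⟨a, ha, h⟩
        simp only [eval_sub, eval_X, eval_C, sub_eq_zero] at h
        rwa [show x = a from Units.ext h]
      · intro hx
        exact ⟨x, hx, by simp⟩
    have hPBiff : ∀ y : Fˣ, PB.eval (↑y : F) = 0 ↔ y ∈ B := by
      intro y
      rw [hPB, eval_prod, Finset.prod_eq_zero_iff]
      constructor
      · rintro ⟨a, ha, h⟩
        simp only [eval_sub, eval_X, eval_C, sub_eq_zero] at h
        rwa [show y = a from Units.ext h]
      · intro hy
        exact ⟨y, hy, by simp⟩
    have hwev : ∀ p : Fˣ × Fˣ,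
        (∑ e : Fin (k+1) × Fin (l+1),
          PA.coeff ↑e.1 * PB.coeff ↑e.2 * (↑p.1 : F) ^ (e.1:ℕ) * (↑p.2 : F) ^ (e.2:ℕ))
        = PA.eval ↑p.1 * PB.eval ↑p.2 := by
      intro p
      have e1 : PA.eval (↑p.1 : F) = ∑ i : Fin (k+1), PA.coeff ↑i * (↑p.1 : F) ^ (i:ℕ) := by
        rw [Polynomial.eval_eq_sum_range' (n := k+1) (by rw [hPAdeg]; omega)]
        exact (Fin.sum_univ_eq_sum_range _ _).symm
      have e2 : PB.eval (↑p.2 : F) = ∑ j : Fin (l+1), PB.coeff ↑j * (↑p.2 : F) ^ (j:ℕ) := by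
        rw [Polynomial.eval_eq_sum_range' (n := l+1) (by rw [hPBdeg]; omega)]
        exact (Fin.sum_univ_eq_sum_range _ _).symm
      rw [e1, e2, Finset.sum_mul_sum, Fintype.sum_prod_type]
      refine Finset.sum_congr rfl fun i _ => Finset.sum_congr rfl fun j _ => by ring
    have hwfun : (fun p : Fˣ × Fˣ => ∑ e : Fin (k+1) × Fin (l+1),
        (fun e : Fin (k+1) × Fin (l+1) => PA.coeff ↑e.1 * PB.coeff ↑e.2) e
          * (↑p.1 : F) ^ (e.1:ℕ) * (↑p.2 : F) ^ (e.2:ℕ))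
        = fun p : Fˣ × Fˣ => PA.eval ↑p.1 * PB.eval ↑p.2 := funext fun p => hwev p
    have hAc : 0 < (Aᶜ : Finset Fˣ).card := by
      rw [Finset.card_compl, Fintype.card_units, hq, hA]; omega
    have hBc : 0 < (Bᶜ : Finset Fˣ).card := by
      rw [Finset.card_compl, Fintype.card_units, hq, hB]; omega
    obtain ⟨x0, hx0⟩ := Finset.card_pos.mp hAc
    obtain ⟨y0, hy0⟩ := Finset.card_pos.mp hBc
    refine ⟨_, ⟨fun e : Fin (k+1) × Fin (l+1) => PA.coeff ↑e.1 * PB.coeff ↑e.2, rfl⟩, ?_, ?_⟩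
    · rw [hwfun]
      intro h0
      have h1 := congrFun h0 (x0, y0)
      simp only [Pi.zero_apply] at h1
      exact absurd h1 (mul_ne_zero
        (fun h => Finset.mem_compl.mp hx0 ((hPAiff x0).mp h))
        (fun h => Finset.mem_compl.mp hy0 ((hPBiff y0).mp h)))
    · simp only [hwev]
      have hset : {p : Fˣ × Fˣ | (fun p : Fˣ × Fˣ => PA.eval ↑p.1 * PB.eval ↑p.2) p ≠ 0}
          = ↑((Aᶜ : Finset Fˣ) ×ˢ (Bᶜ : Finset Fˣ)) := by
        ext p
        simp only [Set.mem_setOf_eq, Finset.coe_product, Set.mem_prod, Finset.mem_coe,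
          Finset.mem_compl, mul_ne_zero_iff, ne_eq, hPAiff, hPBiff]
      rw [hset, Set.ncard_coe_finset, Finset.card_product, Finset.card_compl,
        Finset.card_compl, Fintype.card_units, hq, hA, hB]
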